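/- Under the MNL model with outside option at θ₀ ∈ ℝ^d, write w_i := exp(a_iᵀθ₀) and, for a design π over 𝒮, define M(π) := E_{S∼π}[I_{θ₀}(S)] and Δ(π) := E_{S∼π}[ā_{θ₀}(S) ā_{θ₀}(S)ᵀ] − E_{S∼π}[ā_{θ₀}(S)] E_{S∼π}[ā_{θ₀}(S)]ᵀ. Then Δ(π) ⪯ (max_{S ∈ supp(π)} Σ_{j∈S} w_j) · M(π) in the Loewner order. In particular, if |S| ≤ K for all S ∈ 𝒮 and a_jᵀθ₀ ≤ B for all j ∈ [N], then the smallest ε ≥ 0 with Δ(π) ⪯ ε · M(π) satisfies ε ≤ K e^B. -/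

import Mathlib

open Matrix

noncomputable section

/-- MNL choice probability with outside option. -/
def mnlPOut {N d : ℕ} (a : Fin N → Fin d → ℝ) (θ : Fin d → ℝ) (S : Finset (Fin N)) (i : Fin N) :
    ℝ :=
  Real.exp (a i ⬝ᵥ θ) / (1 + ∑ j ∈ S, Real.exp (a j ⬝ᵥ θ))

/-- Mean feature vector under the outside-option MNL choice probabilities. -/
def abarOut {N d : ℕ} (a : Fin N → Fin d → ℝ) (θ : Fin d → ℝ) (S : Finset (Fin N)) :
    Fin d → ℝ :=
  ∑ i ∈ S, mnlPOut a θ S i • a i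

/-- Uncentered second-moment matrix under the outside-option MNL model. -/
def AbarOut {N d : ℕ} (a : Fin N → Fin d → ℝ) (θ : Fin d → ℝ) (S : Finset (Fin N)) :
    Matrix (Fin d) (Fin d) ℝ :=
  ∑ i ∈ S, mnlPOut a θ S i • vecMulVec (a i) (a i)

/-- Fisher information matrix under the outside-option MNL model. -/
def fisherOut {N d : ℕ} (a : Fin N → Fin d → ℝ) (θ : Fin d → ℝ) (S : Finset (Fin N)) :
    Matrix (Fin d) (Fin d) ℝ :=
  AbarOut a θ S - vecMulVec (abarOut a θ S) (abarOut a θ S)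

/-- A design: a probability distribution over the collection `𝒮` of feasible assortments. -/
def IsDesign {N : ℕ} (𝒮 : Finset (Finset (Fin N))) (π : Finset (Fin N) → ℝ) : Prop :=
  (∀ S, 0 ≤ π S) ∧ (∀ S, S ∉ 𝒮 → π S = 0) ∧ (∑ S ∈ 𝒮, π S) = 1

/-- Expected Fisher information matrix of a design, outside-option model. -/
def designMOut {N d : ℕ} (a : Fin N → Fin d → ℝ) (θ : Fin d → ℝ)
    (𝒮 : Finset (Finset (Fin N))) (π : Finset (Fin N) → ℝ) : Matrix (Fin d) (Fin d) ℝ :=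
  ∑ S ∈ 𝒮, π S • fisherOut a θ S

/-- Mismatch matrix `Δ(π) = E_π[ā āᵀ] − (E_π ā)(E_π ā)ᵀ`, outside-option model. -/
def mismatchOut {N d : ℕ} (a : Fin N → Fin d → ℝ) (θ : Fin d → ℝ)
    (𝒮 : Finset (Finset (Fin N))) (π : Finset (Fin N) → ℝ) : Matrix (Fin d) (Fin d) ℝ :=
  (∑ S ∈ 𝒮, π S • vecMulVec (abarOut a θ S) (abarOut a θ S)) -
    vecMulVec (∑ S ∈ 𝒮, π S • abarOut a θ S) (∑ S ∈ 𝒮, π S • abarOut a θ S)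


section Helpers

lemma dotSumSmul {d : ℕ} {ι : Type*} (s : Finset ι) (c : ι → ℝ) (v : ι → Fin d → ℝ)
    (x : Fin d → ℝ) : (∑ i ∈ s, c i • v i) ⬝ᵥ x = ∑ i ∈ s, c i * (v i ⬝ᵥ x) := by
  simp only [dotProduct, Finset.sum_apply, Pi.smul_apply, smul_eq_mul, Finset.mul_sum,
    Finset.sum_mul]
  rw [Finset.sum_comm]
  congr 1; ext i; congr 1; ext j; ring

lemma quadVV {d : ℕ} (v x : Fin d → ℝ) : x ⬝ᵥ (vecMulVec v v *ᵥ x) = (v ⬝ᵥ x)^2 := by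
  simp only [vecMulVec, mulVec, dotProduct, of_apply, Finset.mul_sum, Finset.sum_mul, sq]
  rw [Finset.sum_comm]
  congr 1; ext i; congr 1; ext j; ring

lemma quadSum {d : ℕ} {ι : Type*} (s : Finset ι) (M : ι → Matrix (Fin d) (Fin d) ℝ)
    (x : Fin d → ℝ) : x ⬝ᵥ ((∑ i ∈ s, M i) *ᵥ x) = ∑ i ∈ s, x ⬝ᵥ (M i *ᵥ x) := by
  classical
  induction s using Finset.induction_on with
  | empty => simp [mulVec, dotProduct]
  | insert _ _ h ih => rw [Finset.sum_insert h, Finset.sum_insert h, add_mulVec, dotProduct_add, ih]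

lemma quadSmul {d : ℕ} (c : ℝ) (M : Matrix (Fin d) (Fin d) ℝ) (x : Fin d → ℝ) :
    x ⬝ᵥ ((c • M) *ᵥ x) = c * (x ⬝ᵥ (M *ᵥ x)) := by
  rw [smul_mulVec, dotProduct_smul, smul_eq_mul]

lemma hermVV {d : ℕ} (v : Fin d → ℝ) : (vecMulVec v v).IsHermitian := by
  ext i j; simp [vecMulVec, conjTranspose, mul_comm]

lemma fisherQuad {N d : ℕ} (a : Fin N → Fin d → ℝ) (θ : Fin d → ℝ) (S : Finset (Fin N))
    (x : Fin d → ℝ) :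
    x ⬝ᵥ (fisherOut a θ S *ᵥ x) =
      (∑ i ∈ S, mnlPOut a θ S i * (a i ⬝ᵥ x)^2) -
        (∑ i ∈ S, mnlPOut a θ S i * (a i ⬝ᵥ x))^2 := by
  rw [fisherOut, sub_mulVec, dotProduct_sub, AbarOut, quadSum, abarOut, quadVV, dotSumSmul]
  congr 1
  refine Finset.sum_congr rfl fun i _ => ?_
  rw [quadSmul, quadVV]

lemma abarDot {N d : ℕ} (a : Fin N → Fin d → ℝ) (θ : Fin d → ℝ) (S : Finset (Fin N))
    (x : Fin d → ℝ) :
    abarOut a θ S ⬝ᵥ x = ∑ i ∈ S, mnlPOut a θ S i * (a i ⬝ᵥ x) :=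
  dotSumSmul ..

/-- Key pointwise inequality: `(ā·x)² ≤ (Σ w_j) · xᵀ I x`. -/
lemma keyIneq {N d : ℕ} (a : Fin N → Fin d → ℝ) (θ : Fin d → ℝ) (S : Finset (Fin N))
    (x : Fin d → ℝ) :
    (abarOut a θ S ⬝ᵥ x)^2 ≤
      (∑ j ∈ S, Real.exp (a j ⬝ᵥ θ)) * (x ⬝ᵥ (fisherOut a θ S *ᵥ x)) := by
  set T : ℝ := ∑ j ∈ S, Real.exp (a j ⬝ᵥ θ) with hT
  have hT0 : 0 ≤ T := Finset.sum_nonneg fun j _ => (Real.exp_pos _).le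
  have h1T : (0:ℝ) < 1 + T := by linarith
  set y : Fin N → ℝ := fun i => a i ⬝ᵥ x with hy
  set w : Fin N → ℝ := fun i => Real.exp (a i ⬝ᵥ θ) with hw
  have hp : ∀ i, mnlPOut a θ S i = w i / (1 + T) := fun i => rfl
  have hs : ∑ i ∈ S, mnlPOut a θ S i * y i = (∑ i ∈ S, w i * y i) / (1 + T) := by
    rw [Finset.sum_div]; exact Finset.sum_congr rfl fun i _ => by rw [hp, div_mul_eq_mul_div]
  have hq : ∑ i ∈ S, mnlPOut a θ S i * (y i)^2 = (∑ i ∈ S, w i * (y i)^2) / (1 + T) := by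
    rw [Finset.sum_div]; exact Finset.sum_congr rfl fun i _ => by rw [hp, div_mul_eq_mul_div]
  have hCS : (∑ i ∈ S, w i * y i)^2 ≤ T * (∑ i ∈ S, w i * (y i)^2) := by
    refine Finset.sum_sq_le_sum_mul_sum_of_sq_eq_mul S
      (fun i _ => (Real.exp_pos _).le) (fun i _ => mul_nonneg (Real.exp_pos _).le (sq_nonneg _))
      (fun i _ => by ring)
  rw [abarDot, fisherQuad, hs, hq]
  set s := ∑ i ∈ S, w i * y i
  set q := ∑ i ∈ S, w i * (y i)^2
  rw [div_pow, mul_sub]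
  rw [div_le_iff₀ (by positivity : (0:ℝ) < (1+T)^2)]
  have expand : (T * (q / (1 + T)) - T * (s ^ 2 / (1 + T) ^ 2)) * (1 + T) ^ 2
      = T * q * (1 + T) - T * s ^ 2 := by field_simp
  rw [expand]
  nlinarith [mul_le_mul_of_nonneg_right hCS (le_of_lt h1T)]

lemma hermSum {d : ℕ} {ι : Type*} (s : Finset ι) (M : ι → Matrix (Fin d) (Fin d) ℝ)
    (h : ∀ i ∈ s, (M i).IsHermitian) : (∑ i ∈ s, M i).IsHermitian := by
  classical
  induction s using Finset.induction_on with
  | empty => simpa using isHermitian_zero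
  | @insert a s hni ih =>
    rw [Finset.sum_insert hni]
    exact (h _ (Finset.mem_insert_self _ _)).add (ih fun i hi => h i (Finset.mem_insert_of_mem hi))

lemma hermSmul {d : ℕ} (c : ℝ) {M : Matrix (Fin d) (Fin d) ℝ} (h : M.IsHermitian) :
    (c • M).IsHermitian := by
  rw [Matrix.IsHermitian, conjTranspose_smul, star_trivial, h]

lemma hermFisher {N d : ℕ} (a : Fin N → Fin d → ℝ) (θ : Fin d → ℝ) (S : Finset (Fin N)) :
    (fisherOut a θ S).IsHermitian :=
  (hermSum S _ fun i _ => hermSmul _ (hermVV _)).sub (hermVV _)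

lemma starPi {d : ℕ} (x : Fin d → ℝ) : star x = x := funext fun _ => star_trivial _

end Helpers

/-- Bound on the lifting error under the outside-option MNL model:
`Δ(π) ⪯ (max_{S ∈ supp π} Σ_{j∈S} w_j) · M(π)`, and under the size and utility bounds the
least `ε ≥ 0` with `Δ(π) ⪯ ε M(π)` is at most `K e^B`. -/
theorem mismatch_bound_outside_option {N d K : ℕ} (B : ℝ) (a : Fin N → Fin d → ℝ)
    (θ₀ : Fin d → ℝ)
    (𝒮 : Finset (Finset (Fin N))) (h𝒮 : ∀ S ∈ 𝒮, S.Nonempty)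
    (π : Finset (Fin N) → ℝ) (hπ : IsDesign 𝒮 π) :
    ((sSup ((fun S : Finset (Fin N) => ∑ j ∈ S, Real.exp (a j ⬝ᵥ θ₀)) ''
          {S : Finset (Fin N) | S ∈ 𝒮 ∧ π S ≠ 0})) • designMOut a θ₀ 𝒮 π -
        mismatchOut a θ₀ 𝒮 π).PosSemidef ∧
    ((∀ S ∈ 𝒮, S.card ≤ K) → (∀ j : Fin N, a j ⬝ᵥ θ₀ ≤ B) →
      sInf {ε : ℝ | 0 ≤ ε ∧ (ε • designMOut a θ₀ 𝒮 π - mismatchOut a θ₀ 𝒮 π).PosSemidef} ≤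
        K * Real.exp B) := by
  classical
  obtain ⟨hπ0, hπout, hπ1⟩ := hπ
  set w : Finset (Fin N) → ℝ := fun S => ∑ j ∈ S, Real.exp (a j ⬝ᵥ θ₀) with hwdef
  set c : ℝ := sSup ((fun S : Finset (Fin N) => ∑ j ∈ S, Real.exp (a j ⬝ᵥ θ₀)) ''
    {S : Finset (Fin N) | S ∈ 𝒮 ∧ π S ≠ 0}) with hcdef
  have hsupp : ∃ S ∈ 𝒮, π S ≠ 0 := by
    by_contra h
    push_neg at h
    rw [Finset.sum_eq_zero h] at hπ1
    exact one_ne_zero hπ1.symm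
  have hfin : ({S : Finset (Fin N) | S ∈ 𝒮 ∧ π S ≠ 0}).Finite :=
    (𝒮 : Set (Finset (Fin N))).toFinite.subset fun S hS => hS.1
  have hbdd : BddAbove ((fun S : Finset (Fin N) => ∑ j ∈ S, Real.exp (a j ⬝ᵥ θ₀)) ''
      {S : Finset (Fin N) | S ∈ 𝒮 ∧ π S ≠ 0}) :=
    (hfin.image _).bddAbove
  have hcge : ∀ S ∈ 𝒮, π S ≠ 0 → (∑ j ∈ S, Real.exp (a j ⬝ᵥ θ₀)) ≤ c := fun S h1 h2 =>
    le_csSup hbdd ⟨S, ⟨h1, h2⟩, rfl⟩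
  have hfnn : ∀ S ∈ 𝒮, ∀ x : Fin d → ℝ, 0 ≤ x ⬝ᵥ (fisherOut a θ₀ S *ᵥ x) := by
    intro S hS x
    have hT : 0 < ∑ j ∈ S, Real.exp (a j ⬝ᵥ θ₀) :=
      Finset.sum_pos (fun j _ => Real.exp_pos _) (h𝒮 S hS)
    have hk := keyIneq a θ₀ S x
    nlinarith [sq_nonneg (abarOut a θ₀ S ⬝ᵥ x)]
  -- quadratic forms
  have hQM : ∀ x : Fin d → ℝ, x ⬝ᵥ (designMOut a θ₀ 𝒮 π *ᵥ x) =
      ∑ S ∈ 𝒮, π S * (x ⬝ᵥ (fisherOut a θ₀ S *ᵥ x)) := by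
    intro x
    rw [designMOut, quadSum]
    exact Finset.sum_congr rfl fun S _ => quadSmul _ _ _
  have hQΔ : ∀ x : Fin d → ℝ, x ⬝ᵥ (mismatchOut a θ₀ 𝒮 π *ᵥ x) =
      (∑ S ∈ 𝒮, π S * (abarOut a θ₀ S ⬝ᵥ x) ^ 2) -
        (∑ S ∈ 𝒮, π S * (abarOut a θ₀ S ⬝ᵥ x)) ^ 2 := by
    intro x
    rw [mismatchOut, sub_mulVec, dotProduct_sub, quadSum, quadVV, dotSumSmul]
    congr 1
    refine Finset.sum_congr rfl fun S _ => ?_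
    rw [quadSmul, quadVV]
  -- Hermitian parts
  have hMherm : (designMOut a θ₀ 𝒮 π).IsHermitian :=
    hermSum _ _ fun S _ => hermSmul _ (hermFisher a θ₀ S)
  have hΔherm : (mismatchOut a θ₀ 𝒮 π).IsHermitian :=
    (hermSum _ _ fun S _ => hermSmul _ (hermVV _)).sub (hermVV _)
  -- Main PSD statement for any upper bound e on the weights over the support
  have main : ∀ e : ℝ, (∀ S ∈ 𝒮, π S ≠ 0 → (∑ j ∈ S, Real.exp (a j ⬝ᵥ θ₀)) ≤ e) →
      (e • designMOut a θ₀ 𝒮 π - mismatchOut a θ₀ 𝒮 π).PosSemidef := by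
    intro e he
    refine Matrix.PosSemidef.of_dotProduct_mulVec_nonneg ((hermSmul e hMherm).sub hΔherm) fun x => ?_
    rw [starPi, sub_mulVec, dotProduct_sub, quadSmul, hQM, hQΔ, Finset.mul_sum]
    have hterm : ∀ S ∈ 𝒮, π S * (abarOut a θ₀ S ⬝ᵥ x) ^ 2 ≤
        e * (π S * (x ⬝ᵥ (fisherOut a θ₀ S *ᵥ x))) := by
      intro S hS
      rcases eq_or_ne (π S) 0 with h0 | h0
      · simp [h0]
      · have hk := keyIneq a θ₀ S x
        have hle : (abarOut a θ₀ S ⬝ᵥ x) ^ 2 ≤ e * (x ⬝ᵥ (fisherOut a θ₀ S *ᵥ x)) :=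
          hk.trans (mul_le_mul_of_nonneg_right (he S hS h0) (hfnn S hS x))
        calc π S * (abarOut a θ₀ S ⬝ᵥ x) ^ 2
            ≤ π S * (e * (x ⬝ᵥ (fisherOut a θ₀ S *ᵥ x))) :=
              mul_le_mul_of_nonneg_left hle (hπ0 S)
          _ = e * (π S * (x ⬝ᵥ (fisherOut a θ₀ S *ᵥ x))) := by ring
    have hsum := Finset.sum_le_sum hterm
    nlinarith [sq_nonneg (∑ S ∈ 𝒮, π S * (abarOut a θ₀ S ⬝ᵥ x))]
  refine ⟨main c hcge, fun hK hB => ?_⟩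
  -- Part 2
  have hKB : ∀ S ∈ 𝒮, π S ≠ 0 → (∑ j ∈ S, Real.exp (a j ⬝ᵥ θ₀)) ≤ (K : ℝ) * Real.exp B := by
    intro S hS _
    calc (∑ j ∈ S, Real.exp (a j ⬝ᵥ θ₀)) ≤ ∑ _j ∈ S, Real.exp B :=
          Finset.sum_le_sum fun j _ => Real.exp_le_exp.mpr (hB j)
      _ = (S.card : ℝ) * Real.exp B := by rw [Finset.sum_const, nsmul_eq_mul]
      _ ≤ (K : ℝ) * Real.exp B := by
          exact mul_le_mul_of_nonneg_right (Nat.cast_le.mpr (hK S hS)) (Real.exp_pos _).le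
  have hmem : (K : ℝ) * Real.exp B ∈
      {ε : ℝ | 0 ≤ ε ∧ (ε • designMOut a θ₀ 𝒮 π - mismatchOut a θ₀ 𝒮 π).PosSemidef} :=
    ⟨by positivity, main _ hKB⟩
  exact csInf_le ⟨0, fun ε hε => hε.1⟩ hmem

end
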